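/- Let c : ℕ → ℝ≥0, n ≥ 2, Δ(n) a minimizer of c(d)/(d-2) over d ∈ {3,...,n}, and suppose q(n) = (n-2)/(Δ(n)-2) is an integer. Then there exists a tree T with n pendent vertices, all of whose internal vertices have degree Δ(n), and it satisfies Σ_{v∈V(T)} c(d_T(v)) = n·c(1) + (n-2)·c(Δ(n))/(Δ(n)-2). -/

import Mathlib

open scoped Classical
open Finset

namespace DTree

/-- parent function: parent of `v` is `(v-2)/(Δ-1)`. -/
def pf (Δ v : ℕ) : ℕ := (v - 2) / (Δ - 1)

lemma pf_le (Δ v : ℕ) : pf Δ v ≤ v :=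
  le_trans (Nat.div_le_self _ _) (Nat.sub_le _ _)

lemma pf_lt (Δ : ℕ) {v : ℕ} (hv : v ≠ 0) : pf Δ v < v :=
  lt_of_le_of_lt (Nat.div_le_self _ _) (by omega)

lemma pf_zero (Δ : ℕ) : pf Δ 0 = 0 := by simp [pf]

lemma pf_eq_zero {Δ : ℕ} (hΔ : 3 ≤ Δ) {v : ℕ} : pf Δ v = 0 ↔ v < Δ + 1 := by
  unfold pf
  rw [Nat.div_eq_zero_iff]
  omega

lemma pf_eq {Δ : ℕ} (hΔ : 3 ≤ Δ) {v i : ℕ} (hi : i ≠ 0) :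
    pf Δ v = i ↔ (Δ - 1) * i + 2 ≤ v ∧ v < (Δ - 1) * i + (Δ - 1) + 2 := by
  have ha : 2 ≤ (Δ - 1) * i := le_trans (by omega) (Nat.le_mul_of_pos_right _ (by omega))
  constructor
  · intro h
    have h1 : (Δ - 1) * i ≤ v - 2 := by
      rw [← h]; exact Nat.mul_div_le _ _
    have h2 : v - 2 < (Δ - 1) * i + (Δ - 1) := by
      have hlt : (v - 2) / (Δ - 1) < i + 1 := by unfold pf at h; omega
      rw [Nat.div_lt_iff_lt_mul (by omega : 0 < Δ - 1)] at hlt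
      calc v - 2 < (i + 1) * (Δ - 1) := hlt
        _ = (Δ - 1) * i + (Δ - 1) := by ring
    omega
  · rintro ⟨h1, h2⟩
    unfold pf
    apply Nat.div_eq_of_lt_le
    · rw [mul_comm]; omega
    · rw [Nat.succ_mul, mul_comm]; omega


/-- The caterpillar-ish complete tree graph. -/
def G (Δ m : ℕ) : SimpleGraph (Fin m) where
  Adj v w := (v : ℕ) ≠ (w : ℕ) ∧ (pf Δ v = w ∨ pf Δ w = v)
  symm := ⟨fun v w h => ⟨Ne.symm h.1, Or.symm h.2⟩⟩
  loopless := ⟨fun v h => h.1 rfl⟩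

lemma adj_iff {Δ m : ℕ} {v w : Fin m} :
    (G Δ m).Adj v w ↔ (v : ℕ) ≠ (w : ℕ) ∧ (pf Δ v = w ∨ pf Δ w = v) := Iff.rfl

lemma card_filter_val (m : ℕ) (P : ℕ → Prop) [DecidablePred P] :
    ((univ : Finset (Fin m)).filter fun w => P w.val).card
      = ((range m).filter P).card := by
  refine Finset.card_bij (fun w _ => w.val) ?_ ?_ ?_
  · intro a ha
    simp only [mem_filter, mem_range] at ha ⊢
    exact ⟨a.isLt, ha.2⟩
  · intro a _ b _ h
    exact Fin.ext h
  · intro b hb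
    simp only [mem_filter, mem_range] at hb
    exact ⟨⟨b, hb.1⟩, by simp [hb.2], rfl⟩

lemma degree_eq (Δ m : ℕ) (v : Fin m) :
    (G Δ m).degree v
      = ((range m).filter fun w => (v : ℕ) ≠ w ∧ (pf Δ v = w ∨ pf Δ w = v)).card := by
  have h2 : (G Δ m).neighborFinset v
      = (univ : Finset (Fin m)).filter (fun w => (v : ℕ) ≠ w.val ∧ (pf Δ v = w.val ∨ pf Δ w.val = v)) := by
    ext w
    simp [SimpleGraph.mem_neighborFinset, adj_iff]
  rw [SimpleGraph.degree, h2]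
  exact card_filter_val m (fun w => (v : ℕ) ≠ w ∧ (pf Δ v = w ∨ pf Δ w = v))


lemma degree_root {Δ m : ℕ} (hΔ : 3 ≤ Δ) (v : Fin m) (hv : (v : ℕ) = 0)
    (hm : Δ + 1 ≤ m) : (G Δ m).degree v = Δ := by
  rw [degree_eq]
  have h1 : ((range m).filter fun w => (v : ℕ) ≠ w ∧ (pf Δ v = w ∨ pf Δ w = v))
      = Ico 1 (Δ + 1) := by
    ext w
    simp only [mem_filter, mem_range, mem_Ico, hv, pf_zero, pf_eq_zero hΔ]
    omega
  rw [h1, Nat.card_Ico]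
  omega

lemma degree_mid {Δ m : ℕ} (hΔ : 3 ≤ Δ) (v : Fin m) (hv : 1 ≤ (v : ℕ))
    (hm : (Δ - 1) * (v : ℕ) + (Δ - 1) + 2 ≤ m) : (G Δ m).degree v = Δ := by
  rw [degree_eq]
  have hw0 : pf Δ (v : ℕ) < (v : ℕ) := pf_lt Δ (by omega)
  have hva : (v : ℕ) ≤ (Δ - 1) * (v : ℕ) := Nat.le_mul_of_pos_left _ (by omega)
  have hvm : (v : ℕ) < m := v.isLt
  have h1 : ((range m).filter fun w => (v : ℕ) ≠ w ∧ (pf Δ v = w ∨ pf Δ w = v))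
      = insert (pf Δ (v : ℕ)) (Ico ((Δ - 1) * (v : ℕ) + 2) ((Δ - 1) * (v : ℕ) + (Δ - 1) + 2)) := by
    ext w
    simp only [mem_filter, mem_range, mem_insert, mem_Ico, pf_eq hΔ (show (v:ℕ) ≠ 0 by omega)]
    omega
  rw [h1, Finset.card_insert_of_notMem (by simp only [mem_Ico]; omega), Nat.card_Ico]
  omega

lemma degree_leaf {Δ m : ℕ} (hΔ : 3 ≤ Δ) (v : Fin m) (hv : (v : ℕ) ≠ 0)
    (hm : m ≤ (Δ - 1) * (v : ℕ) + 2) : (G Δ m).degree v = 1 := by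
  rw [degree_eq]
  have hw0 : pf Δ (v : ℕ) < (v : ℕ) := pf_lt Δ hv
  have hvm : (v : ℕ) < m := v.isLt
  have h1 : ((range m).filter fun w => (v : ℕ) ≠ w ∧ (pf Δ v = w ∨ pf Δ w = v))
      = {pf Δ (v : ℕ)} := by
    ext w
    simp only [mem_filter, mem_range, mem_singleton, pf_eq hΔ hv]
    omega
  rw [h1, card_singleton]

lemma degree_root_small {Δ m : ℕ} (hΔ : 3 ≤ Δ) (v : Fin m) (hv : (v : ℕ) = 0)
    (hm : m < Δ + 1) : (G Δ m).degree v = m - 1 := by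
  rw [degree_eq]
  have h1 : ((range m).filter fun w => (v : ℕ) ≠ w ∧ (pf Δ v = w ∨ pf Δ w = v))
      = Ico 1 m := by
    ext w
    simp only [mem_filter, mem_range, mem_Ico, hv, pf_zero, pf_eq_zero hΔ]
    omega
  rw [h1, Nat.card_Ico]


lemma reach {Δ m : ℕ} (hm : 0 < m) :
    ∀ k (hk : k < m), (G Δ m).Reachable ⟨k, hk⟩ ⟨0, hm⟩ := by
  intro k
  induction k using Nat.strong_induction_on with
  | _ k ih =>
    intro hk
    rcases Nat.eq_zero_or_pos k with rfl | hk0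
    · exact SimpleGraph.Reachable.refl _
    · have hlt : pf Δ k < k := pf_lt Δ (by omega)
      have hadj : (G Δ m).Adj ⟨k, hk⟩ ⟨pf Δ k, lt_trans hlt hk⟩ := by
        refine ⟨?_, Or.inl rfl⟩
        simp only [Fin.val_mk]
        omega
      exact (hadj.reachable).trans (ih _ hlt _)

lemma connected {Δ m : ℕ} (hm : 0 < m) : (G Δ m).Connected := by
  rw [SimpleGraph.connected_iff]
  refine ⟨fun u v => ?_, ⟨⟨0, hm⟩⟩⟩
  exact (reach hm u u.isLt).trans (reach hm v v.isLt).symm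


lemma acyclic {Δ m : ℕ} (hΔ : 3 ≤ Δ) : (G Δ m).IsAcyclic := by
  intro v c hc
  classical
  have hvmem : v ∈ c.support := c.start_mem_support
  have hne : (c.support.toFinset : Finset (Fin m)).Nonempty := ⟨v, List.mem_toFinset.2 hvmem⟩
  set u : Fin m := c.support.toFinset.max' hne with hu
  have hu_mem : u ∈ c.support := List.mem_toFinset.1 (c.support.toFinset.max'_mem hne)
  have hmax : ∀ x ∈ c.support, x ≤ u := fun x hx => c.support.toFinset.le_max' x (List.mem_toFinset.2 hx)
  set d := c.rotate u hu_mem with hdd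
  have hd : d.IsCycle := hc.rotate hu_mem
  have hdsup : ∀ x ∈ d.support, x ≤ u := by
    intro x hx
    rw [SimpleGraph.Walk.support_eq_cons d] at hx
    rcases List.mem_cons.1 hx with rfl | hx
    · exact le_refl _
    · exact hmax x (List.mem_of_mem_tail
        ((SimpleGraph.Walk.support_rotate c u hu_mem).mem_iff.1 hx))
  obtain ⟨w, hadj, p, hp⟩ := SimpleGraph.Walk.not_nil_iff.mp hd.not_nil
  -- w is a neighbor of the maximal vertex u
  have hw_mem : w ∈ d.support := by
    rw [hp, SimpleGraph.Walk.support_cons]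
    exact List.mem_cons_of_mem _ p.start_mem_support
  have hw_lt : (w : ℕ) < (u : ℕ) := by
    have h1 : w ≤ u := hdsup w hw_mem
    have h2 : (w : ℕ) ≠ (u : ℕ) := fun h => hadj.1 h.symm
    exact lt_of_le_of_ne h1 h2
  have key : ∀ x : Fin m, (G Δ m).Adj u x → (x : ℕ) < (u : ℕ) → (x : ℕ) = pf Δ u := by
    intro x hx hlt
    rcases hx.2 with h | h
    · exact h.symm
    · have := pf_le Δ (x : ℕ); omega
  have hw : (w : ℕ) = pf Δ u := key w hadj hw_lt
  -- the last dart of p also enters u from pf Δ u = w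
  have hpnil : ¬ p.Nil := SimpleGraph.Walk.not_nil_of_ne (fun h => by
    rw [h] at hw_lt; omega)
  have hdarts : p.darts ≠ [] := by
    have hlen := SimpleGraph.Walk.not_nil_iff_lt_length.mp hpnil
    intro hnil
    rw [← SimpleGraph.Walk.length_darts, hnil] at hlen
    simp at hlen
  set dl := p.darts.getLast hdarts with hdl
  have hsnd : dl.snd = u := by rw [hdl, SimpleGraph.Walk.getLast_darts_eq_lastDart]; rfl
  have hfst_mem : dl.fst ∈ p.support :=
    SimpleGraph.Walk.dart_fst_mem_support_of_mem_darts p (List.getLast_mem hdarts)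
  have hfst_mem' : dl.fst ∈ d.support := by
    rw [hp, SimpleGraph.Walk.support_cons]
    exact List.mem_cons_of_mem _ hfst_mem
  have hadj2 : (G Δ m).Adj u dl.fst := by
    have h := dl.adj
    rw [hsnd] at h
    exact h.symm
  have hfst_lt : (dl.fst : ℕ) < (u : ℕ) := by
    have h1 : dl.fst ≤ u := hdsup _ hfst_mem'
    have h2 : (dl.fst : ℕ) ≠ (u : ℕ) := fun h => hadj2.1 h.symm
    exact lt_of_le_of_ne h1 h2
  have hz : (dl.fst : ℕ) = pf Δ u := key _ hadj2 hfst_lt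
  have hfw : dl.fst = w := Fin.ext (by rw [hz, hw])
  -- edge s(u,w) appears twice: as first edge of d and as last edge of p
  have hedge : s(u, w) ∈ p.edges := by
    have hmem : dl.edge ∈ p.edges := by
      rw [SimpleGraph.Walk.edges]
      exact List.mem_map_of_mem (List.getLast_mem hdarts)
    have : dl.edge = s(u, w) := by
      have h5 : dl.toProd = (w, u) := Prod.ext hfw hsnd
      rw [SimpleGraph.Dart.edge, h5, Sym2.eq_swap]
    rwa [this] at hmem
  have hnodup := (hd.isTrail).edges_nodup
  rw [hp, SimpleGraph.Walk.edges_cons] at hnodup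
  exact (List.nodup_cons.1 hnodup).1 hedge

lemma isTree {Δ m : ℕ} (hΔ : 3 ≤ Δ) (hm : 0 < m) : (G Δ m).IsTree :=
  ⟨connected hm, acyclic hΔ⟩

end DTree


/-- If `Δ` minimizes `c(d)/(d-2)` over `d ∈ {3, ..., n}` (with `Δ = 3` when `n = 2`) and
`(Δ-2) ∣ (n-2)`, then there exists a tree with `n` pendent vertices all of whose internal
vertices have degree `Δ`, and its cost is `n·c(1) + (n-2)·c(Δ)/(Δ-2)`. -/
theorem stmt_7 (n : ℕ) (hn : 2 ≤ n) (c : ℕ → ℝ) (hc : ∀ k, 0 ≤ c k)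
    (Δ : ℕ) (hΔ3 : 3 ≤ Δ) (hΔ2 : n = 2 → Δ = 3) (hΔn : 2 < n → Δ ≤ n)
    (hmin : ∀ d : ℕ, 3 ≤ d → d ≤ n → c Δ / ((Δ : ℝ) - 2) ≤ c d / ((d : ℝ) - 2))
    (hdvd : (Δ - 2) ∣ (n - 2)) :
    ∃ (m : ℕ) (G : SimpleGraph (Fin m)),
      G.IsTree ∧ (Finset.univ.filter fun v => G.degree v = 1).card = n ∧
      (∀ v, G.degree v ≠ 1 → G.degree v = Δ) ∧
      ∑ v, c (G.degree v) = (n : ℝ) * c 1 + ((n : ℝ) - 2) * (c Δ / ((Δ : ℝ) - 2)) := by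
  rcases eq_or_lt_of_le hn with hn2 | hn3
  · -- n = 2 : the single-edge tree on two vertices
    have hΔ : Δ = 3 := hΔ2 hn2.symm
    subst hΔ
    refine ⟨2, DTree.G 3 2, DTree.isTree (by norm_num) (by norm_num), ?_, ?_, ?_⟩
    all_goals {
      have hdeg : ∀ v : Fin 2, (DTree.G 3 2).degree v = 1 := by
        intro v
        rcases v with ⟨k, hk⟩
        interval_cases k
        · have := DTree.degree_root_small (Δ := 3) (m := 2) (by norm_num)
            ⟨0, by norm_num⟩ rfl (by norm_num)
          simpa using this
        · exact DTree.degree_leaf (Δ := 3) (m := 2) (by norm_num) ⟨1, by norm_num⟩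
            (by norm_num) (by norm_num)
      first
      | · -- leaf count
          have he : ((univ : Finset (Fin 2)).filter fun v => (DTree.G 3 2).degree v = 1)
              = univ := by
            ext v; simp [hdeg v]
          rw [he, card_univ]
          simp [← hn2]
      | · -- internal degrees (vacuous)
          intro v hv
          exact absurd (hdeg v) hv
      | · -- cost
          have he : ∑ v : Fin 2, c ((DTree.G 3 2).degree v) = ∑ _v : Fin 2, c 1 :=
            Finset.sum_congr rfl (fun v _ => by rw [hdeg v])
          rw [he, Finset.sum_const, card_univ]
          rw [← hn2]
          norm_num
    }
  · -- n ≥ 3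
    set q : ℕ := (n - 2) / (Δ - 2) with hqdef
    have hq : q * (Δ - 2) = n - 2 := Nat.div_mul_cancel hdvd
    have hq1 : 1 ≤ q := by
      rcases Nat.eq_zero_or_pos q with h | h
      · rw [h, zero_mul] at hq; omega
      · exact h
    set m : ℕ := n + q with hmdef
    have hmul : q * (Δ - 1) = q * (Δ - 2) + q := by
      have e1 : Δ - 1 = (Δ - 2) + 1 := by omega
      rw [e1, Nat.mul_add, mul_one]
    have hm2 : m = q * (Δ - 1) + 2 := by omega
    have hΔm : Δ + 1 ≤ m := by
      have h1 : Δ - 1 ≤ q * (Δ - 1) := Nat.le_mul_of_pos_left _ hq1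
      omega
    have hdeg : ∀ v : Fin m, (DTree.G Δ m).degree v = if (v : ℕ) < q then Δ else 1 := by
      intro v
      by_cases h : (v : ℕ) < q
      · rw [if_pos h]
        rcases Nat.eq_zero_or_pos (v : ℕ) with h0 | h0
        · exact DTree.degree_root hΔ3 v h0 hΔm
        · refine DTree.degree_mid hΔ3 v h0 ?_
          have h1 : (Δ - 1) * ((v : ℕ) + 1) ≤ (Δ - 1) * q :=
            Nat.mul_le_mul_left _ (by omega)
          rw [Nat.mul_add, mul_one] at h1
          have h2 : (Δ - 1) * q = q * (Δ - 1) := mul_comm _ _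
          omega
      · rw [if_neg h]
        refine DTree.degree_leaf hΔ3 v (by omega) ?_
        have h1 : (Δ - 1) * q ≤ (Δ - 1) * (v : ℕ) := Nat.mul_le_mul_left _ (by omega)
        have h2 : (Δ - 1) * q = q * (Δ - 1) := mul_comm _ _
        omega
    refine ⟨m, DTree.G Δ m, DTree.isTree hΔ3 (by omega), ?_, ?_, ?_⟩
    · -- leaf count
      have he : ((univ : Finset (Fin m)).filter fun v => (DTree.G Δ m).degree v = 1)
          = univ.filter (fun v : Fin m => ¬ ((v : ℕ) < q)) := by
        ext v
        simp only [mem_filter, mem_univ, true_and, hdeg v]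
        split_ifs with h
        · simp only [h, not_true_eq_false, iff_false]; omega
        · simp [h]
      rw [he, DTree.card_filter_val m (fun w => ¬ (w < q))]
      have h3 : ((range m).filter fun w => ¬ (w < q)) = Ico q m := by
        ext w; simp only [mem_filter, mem_range, mem_Ico]; omega
      rw [h3, Nat.card_Ico]
      omega
    · -- internal degrees
      intro v hv
      rw [hdeg v] at hv ⊢
      by_cases h : (v : ℕ) < q
      · rw [if_pos h]
      · rw [if_neg h] at hv; exact absurd rfl hv
    · -- cost
      have he : ∑ v : Fin m, c ((DTree.G Δ m).degree v)
          = ∑ v : Fin m, (if (v : ℕ) < q then c Δ else c 1) :=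
        Finset.sum_congr rfl (fun v _ => by rw [hdeg v, apply_ite c])
      rw [he, Finset.sum_ite, Finset.sum_const, Finset.sum_const]
      have hcq : ((univ : Finset (Fin m)).filter fun v : Fin m => (v : ℕ) < q).card = q := by
        rw [DTree.card_filter_val m (fun w => w < q)]
        have h3 : ((range m).filter fun w => w < q) = range q := by
          ext w; simp only [mem_filter, mem_range]; omega
        rw [h3, card_range]
      have hcn : ((univ : Finset (Fin m)).filter fun v : Fin m => ¬ ((v : ℕ) < q)).card = n := by
        rw [DTree.card_filter_val m (fun w => ¬ (w < q))]
        have h3 : ((range m).filter fun w => ¬ (w < q)) = Ico q m := by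
          ext w; simp only [mem_filter, mem_range, mem_Ico]; omega
        rw [h3, Nat.card_Ico]
        omega
      rw [hcq, hcn, nsmul_eq_mul, nsmul_eq_mul]
      have hΔr : ((Δ : ℝ) - 2) ≠ 0 := by
        have h4 : (3 : ℝ) ≤ (Δ : ℝ) := by exact_mod_cast hΔ3
        linarith
      have hcast : (q : ℝ) * ((Δ : ℝ) - 2) = (n : ℝ) - 2 := by
        have h2 : ((q * (Δ - 2) : ℕ) : ℝ) = ((n - 2 : ℕ) : ℝ) := by rw [hq]
        rw [Nat.cast_mul, Nat.cast_sub (by omega : 2 ≤ Δ), Nat.cast_sub hn] at h2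
        exact_mod_cast h2
      have h5 : ((n : ℝ) - 2) * (c Δ / ((Δ : ℝ) - 2)) = (q : ℝ) * c Δ := by
        rw [← hcast]
        field_simp
      rw [h5]
      ring
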